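/- arXiv:1704.02238 — 2 statements merged into one kernel-verified Lean document; each statement's English description precedes it below -/
import Mathlib

section
/- There exists a constant c > 0 such that for every natural number N ≥ 2, the number of integer triples (x, y, z) with |x| ≤ N, |y| ≤ N, |z| ≤ N satisfying 9x² + 36y² − 4z² = 0 is at most c·N·log N. -/
set_option maxHeartbeats 1000000

lemma sol_structure (x y z : ℤ) (h : 9 * x ^ 2 + 36 * y ^ 2 - 4 * z ^ 2 = 0) :
    ∃ u w : ℤ, x = 2 * u ∧ z = 3 * w ∧ u ^ 2 + y ^ 2 = w ^ 2 := by
  have h2 : (2 : ℤ) ∣ x := by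
    rcases Int.even_or_odd x with he | ho
    · exact he.two_dvd
    · exfalso
      obtain ⟨k, hk⟩ := ho
      subst hk
      have h' : 36 * k ^ 2 + 36 * k + 9 + 36 * y ^ 2 - 4 * z ^ 2 = 0 := by
        linear_combination h
      obtain ⟨a, ha⟩ : ∃ a, k ^ 2 = a := ⟨_, rfl⟩
      obtain ⟨b, hb⟩ : ∃ b, y ^ 2 = b := ⟨_, rfl⟩
      obtain ⟨c, hc⟩ : ∃ c, z ^ 2 = c := ⟨_, rfl⟩
      rw [ha, hb, hc] at h'
      omega
  obtain ⟨u, hu⟩ := h2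
  subst hu
  have h3 : (3 : ℤ) ∣ z := by
    have hz2 : (3 : ℤ) ∣ z ^ 2 := ⟨3 * u ^ 2 + 3 * y ^ 2, by ring_nf at h ⊢; linarith⟩
    exact Int.Prime.dvd_pow' (by norm_num) hz2
  obtain ⟨w, hw⟩ := h3
  subst hw
  exact ⟨u, w, rfl, rfl, by ring_nf at h ⊢; linarith⟩

lemma rep_sq (a b k : ℕ) (ha : 0 < a) (hb : 0 < b) (h : a * b = k ^ 2) :
    a = Nat.gcd a b * Nat.sqrt (a / Nat.gcd a b) ^ 2 := by
  set g := Nat.gcd a b with hgdef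
  have hg : 0 < g := Nat.gcd_pos_of_pos_left _ ha
  have hag : g * (a / g) = a := Nat.mul_div_cancel' (Nat.gcd_dvd_left a b)
  have hbg : g * (b / g) = b := Nat.mul_div_cancel' (Nat.gcd_dvd_right a b)
  have hcop : Nat.Coprime (a / g) (b / g) := Nat.coprime_div_gcd_div_gcd hg
  have hgk : g ∣ k := by
    refine (Nat.pow_dvd_pow_iff (two_ne_zero)).mp ⟨(a / g) * (b / g), ?_⟩
    calc k ^ 2 = a * b := h.symm
      _ = (g * (a / g)) * (g * (b / g)) := by rw [hag, hbg]
      _ = g ^ 2 * ((a / g) * (b / g)) := by ring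
  obtain ⟨m, hm⟩ := hgk
  have hm2 : (a / g) * (b / g) = m ^ 2 := by
    have : g ^ 2 * ((a / g) * (b / g)) = g ^ 2 * m ^ 2 := by
      calc g ^ 2 * ((a / g) * (b / g)) = (g * (a/g)) * (g * (b/g)) := by ring
        _ = a * b := by rw [hag, hbg]
        _ = k ^ 2 := h
        _ = g ^ 2 * m ^ 2 := by rw [hm]; ring
    exact Nat.eq_of_mul_eq_mul_left (by positivity) this
  have hcop' : Int.gcd (a / g : ℕ) (b / g : ℕ) = 1 := by
    rw [Int.gcd_natCast_natCast]; exact hcop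
  obtain ⟨s, hs | hs⟩ := Int.sq_of_gcd_eq_one hcop'
    (by exact_mod_cast hm2 : ((a / g : ℕ) : ℤ) * ((b / g : ℕ) : ℤ) = (m : ℤ) ^ 2)
  · have h1 : (a / g : ℕ) = s.natAbs ^ 2 := by
      have : ((a / g : ℕ) : ℤ) = (s.natAbs : ℤ) ^ 2 := by
        rw [hs, Int.natAbs_sq]
      exact_mod_cast this
    have h2 : Nat.sqrt (a / g) = s.natAbs := by rw [h1, sq, Nat.sqrt_eq]
    rw [h2, ← h1, hag]
  · exfalso
    have ha1 : 0 < a / g := Nat.div_pos (Nat.le_of_dvd ha (Nat.gcd_dvd_left a b)) hg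
    have : ((a / g : ℕ) : ℤ) ≤ 0 := by rw [hs]; nlinarith [sq_nonneg s]
    omega

lemma sum_div_le (M : ℕ) : (∑ g ∈ Finset.Icc 1 M, ((M / g : ℕ) : ℝ))
    ≤ (M : ℝ) * (1 + Real.log M) := by
  calc ∑ g ∈ Finset.Icc 1 M, ((M / g : ℕ) : ℝ)
      ≤ ∑ g ∈ Finset.Icc 1 M, (M : ℝ) * ((g : ℝ))⁻¹ := by
        refine Finset.sum_le_sum fun g hg => ?_
        calc ((M / g : ℕ) : ℝ) ≤ (M : ℝ) / (g : ℝ) := Nat.cast_div_le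
          _ = (M : ℝ) * ((g : ℝ))⁻¹ := div_eq_mul_inv _ _
    _ = (M : ℝ) * ∑ g ∈ Finset.Icc 1 M, ((g : ℝ))⁻¹ := by rw [Finset.mul_sum]
    _ = (M : ℝ) * ((harmonic M : ℚ) : ℝ) := by
        rw [harmonic_eq_sum_Icc]; push_cast; ring
    _ ≤ (M : ℝ) * (1 + Real.log M) := by
        have := harmonic_le_one_add_log M
        have hM : (0:ℝ) ≤ M := Nat.cast_nonneg M
        nlinarith

theorem diagonal_cone_solution_count_bound :
    ∃ c : ℝ, 0 < c ∧ ∀ N : ℕ, 2 ≤ N →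
      (((Finset.Icc (-(N : ℤ)) N ×ˢ Finset.Icc (-(N : ℤ)) N ×ˢ
            Finset.Icc (-(N : ℤ)) N).filter
          (fun p : ℤ × ℤ × ℤ =>
            9 * p.1 ^ 2 + 36 * p.2.1 ^ 2 - 4 * p.2.2 ^ 2 = 0)).card : ℝ)
        ≤ c * N * Real.log N := by
  refine ⟨2000, by norm_num, ?_⟩
  intro N hN
  set M := 2 * N with hMdef
  set S := ((Finset.Icc (-(N : ℤ)) N ×ˢ Finset.Icc (-(N : ℤ)) N ×ˢ
        Finset.Icc (-(N : ℤ)) N).filter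
      (fun p : ℤ × ℤ × ℤ =>
        9 * p.1 ^ 2 + 36 * p.2.1 ^ 2 - 4 * p.2.2 ^ 2 = 0)) with hS
  set T := ((Finset.Icc (-(N : ℤ)) N ×ˢ Finset.Icc (-(N : ℤ)) N ×ˢ
        Finset.Icc (-(N : ℤ)) N).filter
      (fun p : ℤ × ℤ × ℤ => p.1 ^ 2 + p.2.1 ^ 2 = p.2.2 ^ 2)) with hT
  set U := ((Finset.Icc (0 : ℤ) N ×ˢ Finset.Icc (0 : ℤ) N ×ˢ
        Finset.Icc (0 : ℤ) N).filter
      (fun p : ℤ × ℤ × ℤ => p.1 ^ 2 + p.2.1 ^ 2 = p.2.2 ^ 2)) with hU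
  set V := ((Finset.range (M + 1) ×ˢ Finset.range (M + 1)).filter
      (fun p : ℕ × ℕ => Nat.sqrt (p.1 * p.2) ^ 2 = p.1 * p.2)) with hV
  set W := ((Finset.Icc 1 M ×ˢ Finset.Icc 1 M ×ˢ Finset.Icc 1 M).filter
      (fun q : ℕ × ℕ × ℕ => q.1 * q.2.1 ^ 2 ≤ M ∧ q.1 * q.2.2 ^ 2 ≤ M)) with hW
  have hA : S.card ≤ T.card := by
    apply Finset.card_le_card_of_injOn (fun p => (p.1 / 2, p.2.1, p.2.2 / 3))
    · intro p hp
      simp only [hS, hT, Finset.mem_coe, Finset.mem_filter, Finset.mem_product, Finset.mem_Icc] at hp ⊢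
      obtain ⟨⟨⟨hx1, hx2⟩, ⟨hy1, hy2⟩, hz1, hz2⟩, heq⟩ := hp
      obtain ⟨u, w, hu, hw, huw⟩ := sol_structure p.1 p.2.1 p.2.2 heq
      rw [hu] at hx1 hx2
      rw [hw] at hz1 hz2
      rw [hu, hw, Int.mul_ediv_cancel_left u (by norm_num),
        Int.mul_ediv_cancel_left w (by norm_num)]
      exact ⟨⟨⟨by omega, by omega⟩, ⟨hy1, hy2⟩, by omega, by omega⟩, huw⟩
    · intro p hp q hq he
      simp only [hS, Finset.coe_filter, Set.mem_setOf_eq, Finset.mem_product] at hp hq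
      obtain ⟨u, w, hu, hw, _⟩ := sol_structure p.1 p.2.1 p.2.2 hp.2
      obtain ⟨u', w', hu', hw', _⟩ := sol_structure q.1 q.2.1 q.2.2 hq.2
      obtain ⟨h1, h2, h3⟩ : p.1 / 2 = q.1 / 2 ∧ p.2.1 = q.2.1 ∧ p.2.2 / 3 = q.2.2 / 3 := by
        simpa [Prod.ext_iff] using he
      rw [hu, hu', Int.mul_ediv_cancel_left u (by norm_num),
        Int.mul_ediv_cancel_left u' (by norm_num)] at h1
      rw [hw, hw', Int.mul_ediv_cancel_left w (by norm_num),
        Int.mul_ediv_cancel_left w' (by norm_num)] at h3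
      have : p.1 = q.1 := by rw [hu, hu', h1]
      have : p.2.2 = q.2.2 := by rw [hw, hw', h3]
      exact Prod.ext ‹p.1 = q.1› (Prod.ext h2 ‹p.2.2 = q.2.2›)
  have hB : T.card ≤ 8 * U.card := by
    apply Finset.card_le_mul_card_image_of_maps_to
      (f := fun p : ℤ × ℤ × ℤ => (|p.1|, |p.2.1|, |p.2.2|))
    · intro p hp
      simp only [hT, hU, Finset.mem_filter, Finset.mem_product, Finset.mem_Icc] at hp ⊢
      obtain ⟨⟨⟨hx1, hx2⟩, ⟨hy1, hy2⟩, hz1, hz2⟩, heq⟩ := hp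
      refine ⟨⟨⟨abs_nonneg _, abs_le.mpr ⟨hx1, hx2⟩⟩,
        ⟨abs_nonneg _, abs_le.mpr ⟨hy1, hy2⟩⟩,
        abs_nonneg _, abs_le.mpr ⟨hz1, hz2⟩⟩, ?_⟩
      simp only [sq_abs]
      exact heq
    · intro b hb
      have habs : ∀ x c : ℤ, |x| = c → x = c ∨ x = -c := by
        intro x c h
        rcases abs_cases x with ⟨h2, _⟩ | ⟨h2, _⟩ <;> rw [h2] at h <;> omega
      have hsub : T.filter (fun a => (|a.1|, |a.2.1|, |a.2.2|) = b) ⊆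
          ({b.1, -b.1} ×ˢ ({b.2.1, -b.2.1} ×ˢ {b.2.2, -b.2.2})) := by
        intro a ha
        simp only [Finset.mem_filter] at ha
        obtain ⟨h1, h2, h3⟩ : |a.1| = b.1 ∧ |a.2.1| = b.2.1 ∧ |a.2.2| = b.2.2 := by
          simpa [Prod.ext_iff] using ha.2
        simp only [Finset.mem_product, Finset.mem_insert, Finset.mem_singleton]
        exact ⟨habs _ _ h1, habs _ _ h2, habs _ _ h3⟩
      refine (Finset.card_le_card hsub).trans ?_
      rw [Finset.card_product, Finset.card_product]
      have c1 : ({b.1, -b.1} : Finset ℤ).card ≤ 2 :=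
        (Finset.card_insert_le _ _).trans (by simp)
      have c2 : ({b.2.1, -b.2.1} : Finset ℤ).card ≤ 2 :=
        (Finset.card_insert_le _ _).trans (by simp)
      have c3 : ({b.2.2, -b.2.2} : Finset ℤ).card ≤ 2 :=
        (Finset.card_insert_le _ _).trans (by simp)
      calc ({b.1, -b.1} : Finset ℤ).card * (({b.2.1, -b.2.1} : Finset ℤ).card *
            ({b.2.2, -b.2.2} : Finset ℤ).card) ≤ 2 * (2 * 2) :=
          Nat.mul_le_mul c1 (Nat.mul_le_mul c2 c3)
        _ = 8 := by norm_num
  have hC : U.card ≤ V.card := by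
    apply Finset.card_le_card_of_injOn
      (fun p : ℤ × ℤ × ℤ => ((p.2.2 - p.2.1).toNat, (p.2.2 + p.2.1).toNat))
    · intro p hp
      simp only [hU, hV, Finset.mem_coe, Finset.mem_filter, Finset.mem_product, Finset.mem_Icc,
        Finset.mem_range] at hp ⊢
      obtain ⟨⟨⟨hx1, hx2⟩, ⟨hy1, hy2⟩, hz1, hz2⟩, heq⟩ := hp
      have hyw : p.2.1 ≤ p.2.2 := by nlinarith
      have key : (p.2.2 - p.2.1).toNat * (p.2.2 + p.2.1).toNat = p.1.toNat ^ 2 := by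
        zify
        push_cast [Int.toNat_of_nonneg (by omega : (0:ℤ) ≤ p.2.2 - p.2.1),
          Int.toNat_of_nonneg (by omega : (0:ℤ) ≤ p.2.2 + p.2.1),
          Int.toNat_of_nonneg hx1]
        linear_combination -heq
      refine ⟨⟨by omega, by omega⟩, ?_⟩
      rw [key]
      have : Nat.sqrt (p.1.toNat ^ 2) = p.1.toNat := by rw [sq, Nat.sqrt_eq]
      rw [this]
    · intro p hp q hq he
      simp only [hU, Finset.coe_filter, Set.mem_setOf_eq, Finset.mem_product,
        Finset.mem_Icc] at hp hq
      obtain ⟨⟨⟨hx1, _⟩, ⟨hy1, _⟩, hz1, _⟩, heq⟩ := hp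
      obtain ⟨⟨⟨hx1', _⟩, ⟨hy1', _⟩, hz1', _⟩, heq'⟩ := hq
      obtain ⟨h1, h2⟩ : (p.2.2 - p.2.1).toNat = (q.2.2 - q.2.1).toNat ∧
          (p.2.2 + p.2.1).toNat = (q.2.2 + q.2.1).toNat := by
        simpa [Prod.ext_iff] using he
      have hyw : p.2.1 ≤ p.2.2 := by nlinarith
      have hyw' : q.2.1 ≤ q.2.2 := by nlinarith
      have e2 : p.2.1 = q.2.1 := by omega
      have e3 : p.2.2 = q.2.2 := by omega
      have e1 : p.1 = q.1 := by
        have hsq : p.1 ^ 2 = q.1 ^ 2 := by rw [e2, e3] at heq; linarith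
        have hfac : (p.1 - q.1) * (p.1 + q.1) = 0 := by linear_combination hsq
        rcases mul_eq_zero.mp hfac with h | h <;> omega
      exact Prod.ext e1 (Prod.ext e2 e3)
  have hD : V.card ≤ 2 * (M + 1) + W.card := by
    have hsplit := Finset.card_filter_add_card_filter_not
      (s := V) (p := fun p : ℕ × ℕ => p.1 = 0 ∨ p.2 = 0)
    have hzero : (V.filter (fun p : ℕ × ℕ => p.1 = 0 ∨ p.2 = 0)).card ≤ 2 * (M + 1) := by
      have hsub : V.filter (fun p : ℕ × ℕ => p.1 = 0 ∨ p.2 = 0) ⊆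
          (({0} : Finset ℕ) ×ˢ Finset.range (M + 1)) ∪
            (Finset.range (M + 1) ×ˢ ({0} : Finset ℕ)) := by
        intro p hp
        simp only [hV, Finset.mem_filter, Finset.mem_product, Finset.mem_range] at hp
        obtain ⟨⟨⟨ha, hb⟩, -⟩, hz⟩ := hp
        simp only [Finset.mem_union, Finset.mem_product, Finset.mem_singleton,
          Finset.mem_range]
        rcases hz with h | h
        · exact Or.inl ⟨h, hb⟩
        · exact Or.inr ⟨ha, h⟩
      refine (Finset.card_le_card hsub).trans ?_
      refine (Finset.card_union_le _ _).trans ?_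
      simp [Finset.card_product]
      omega
    have hnonzero : (V.filter (fun p : ℕ × ℕ => ¬(p.1 = 0 ∨ p.2 = 0))).card ≤ W.card := by
      apply Finset.card_le_card_of_injOn
        (fun p : ℕ × ℕ => (Nat.gcd p.1 p.2, Nat.sqrt (p.1 / Nat.gcd p.1 p.2),
          Nat.sqrt (p.2 / Nat.gcd p.1 p.2)))
      · intro p hp
        simp only [hV, hW, Finset.mem_coe, Finset.mem_filter, Finset.mem_product, Finset.mem_range,
          Finset.mem_Icc] at hp ⊢
        obtain ⟨⟨⟨ha, hb⟩, hsq⟩, hz⟩ := hp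
        push_neg at hz
        have ha1 : 0 < p.1 := Nat.pos_of_ne_zero hz.1
        have hb1 : 0 < p.2 := Nat.pos_of_ne_zero hz.2
        have repa := rep_sq p.1 p.2 (Nat.sqrt (p.1 * p.2)) ha1 hb1 hsq.symm
        have repb := rep_sq p.2 p.1 (Nat.sqrt (p.1 * p.2)) hb1 ha1
          (by rw [mul_comm]; exact hsq.symm)
        rw [Nat.gcd_comm] at repb
        set g := Nat.gcd p.1 p.2 with hgd
        set s := Nat.sqrt (p.1 / g) with hsd
        set t := Nat.sqrt (p.2 / g) with htd
        have hg1 : 0 < g := Nat.gcd_pos_of_pos_left _ ha1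
        have hs1 : 0 < s := by
          rcases Nat.eq_zero_or_pos s with h | h
          · rw [h] at repa; simp at repa; omega
          · exact h
        have ht1 : 0 < t := by
          rcases Nat.eq_zero_or_pos t with h | h
          · rw [h] at repb; simp at repb; omega
          · exact h
        have haM : p.1 ≤ M := by omega
        have hbM : p.2 ≤ M := by omega
        have hgsM : g * s ^ 2 ≤ M := by rw [← repa]; exact haM
        have hgtM : g * t ^ 2 ≤ M := by rw [← repb]; exact hbM
        refine ⟨⟨⟨hg1, ?_⟩, ⟨hs1, ?_⟩, ht1, ?_⟩, hgsM, hgtM⟩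
        · exact (Nat.le_mul_of_pos_right g (by positivity)).trans hgsM
        · exact ((Nat.le_self_pow two_ne_zero s).trans
            (Nat.le_mul_of_pos_left _ hg1)).trans hgsM
        · exact ((Nat.le_self_pow two_ne_zero t).trans
            (Nat.le_mul_of_pos_left _ hg1)).trans hgtM
      · intro p hp q hq he
        simp only [Finset.coe_filter, Set.mem_setOf_eq, hV, Finset.mem_filter,
          Finset.mem_product, Finset.mem_range] at hp hq
        obtain ⟨⟨-, hsq⟩, hz⟩ := hp
        obtain ⟨⟨-, hsq'⟩, hz'⟩ := hq
        push_neg at hz hz'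
        have repa := rep_sq p.1 p.2 (Nat.sqrt (p.1 * p.2)) (Nat.pos_of_ne_zero hz.1)
          (Nat.pos_of_ne_zero hz.2) hsq.symm
        have repb := rep_sq p.2 p.1 (Nat.sqrt (p.1 * p.2)) (Nat.pos_of_ne_zero hz.2)
          (Nat.pos_of_ne_zero hz.1) (by rw [mul_comm]; exact hsq.symm)
        have repa' := rep_sq q.1 q.2 (Nat.sqrt (q.1 * q.2)) (Nat.pos_of_ne_zero hz'.1)
          (Nat.pos_of_ne_zero hz'.2) hsq'.symm
        have repb' := rep_sq q.2 q.1 (Nat.sqrt (q.1 * q.2)) (Nat.pos_of_ne_zero hz'.2)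
          (Nat.pos_of_ne_zero hz'.1) (by rw [mul_comm]; exact hsq'.symm)
        rw [Nat.gcd_comm] at repb repb'
        obtain ⟨h1, h2, h3⟩ : Nat.gcd p.1 p.2 = Nat.gcd q.1 q.2 ∧
            Nat.sqrt (p.1 / Nat.gcd p.1 p.2) = Nat.sqrt (q.1 / Nat.gcd q.1 q.2) ∧
            Nat.sqrt (p.2 / Nat.gcd p.1 p.2) = Nat.sqrt (q.2 / Nat.gcd q.1 q.2) := by
          simpa [Prod.ext_iff] using he
        have e1 : p.1 = q.1 := by rw [repa, repa', h2, h1]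
        have e2 : p.2 = q.2 := by rw [repb, repb', h3, h1]
        exact Prod.ext e1 e2
    omega
  have hG : W.card ≤ ∑ g ∈ Finset.Icc 1 M, Nat.sqrt (M / g) * Nat.sqrt (M / g) := by
    have hsub : W ⊆ (Finset.Icc 1 M).biUnion (fun g =>
        ({g} : Finset ℕ) ×ˢ (Finset.Icc 1 (Nat.sqrt (M / g)) ×ˢ
          Finset.Icc 1 (Nat.sqrt (M / g)))) := by
      intro q hq
      simp only [hW, Finset.mem_filter, Finset.mem_product, Finset.mem_Icc] at hq
      obtain ⟨⟨⟨hg1, hgM⟩, ⟨hs1, hsM⟩, ht1, htM⟩, hgs, hgt⟩ := hq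
      rw [Finset.mem_biUnion]
      refine ⟨q.1, Finset.mem_Icc.mpr ⟨hg1, hgM⟩, ?_⟩
      simp only [Finset.mem_product, Finset.mem_singleton, Finset.mem_Icc]
      refine ⟨by trivial, ⟨hs1, ?_⟩, ht1, ?_⟩
      · exact Nat.le_sqrt.mpr ((Nat.le_div_iff_mul_le hg1).mpr (by nlinarith))
      · exact Nat.le_sqrt.mpr ((Nat.le_div_iff_mul_le hg1).mpr (by nlinarith))
    refine (Finset.card_le_card hsub).trans ?_
    refine (Finset.card_biUnion_le).trans ?_
    refine Finset.sum_le_sum fun g _ => ?_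
    simp [Finset.card_product, Nat.card_Icc]
  have hH : (W.card : ℝ) ≤ (M : ℝ) * (1 + Real.log M) := by
    calc (W.card : ℝ) ≤ ((∑ g ∈ Finset.Icc 1 M, Nat.sqrt (M / g) * Nat.sqrt (M / g) : ℕ) : ℝ) := by
          exact_mod_cast hG
      _ ≤ ∑ g ∈ Finset.Icc 1 M, ((M / g : ℕ) : ℝ) := by
          push_cast
          refine Finset.sum_le_sum fun g hg => ?_
          exact_mod_cast Nat.sqrt_le (M / g)
      _ ≤ (M : ℝ) * (1 + Real.log M) := sum_div_le M
  -- assemble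
  have hnat : (S.card : ℝ) ≤ 8 * (2 * (M + 1) + (M : ℝ) * (1 + Real.log M)) := by
    have : (S.card : ℝ) ≤ 8 * ((2 * (M + 1) : ℕ) + (W.card : ℝ)) := by
      have := hA.trans (hB.trans (Nat.mul_le_mul_left 8 (hC.trans hD)))
      exact_mod_cast this
    push_cast at this ⊢
    nlinarith [hH]
  have hlogN : Real.log 2 ≤ Real.log N := by
    apply Real.log_le_log (by norm_num)
    exact_mod_cast hN
  have hlog2 : (0.6931471803 : ℝ) < Real.log 2 := Real.log_two_gt_d9
  have hNR : (2 : ℝ) ≤ (N : ℝ) := by exact_mod_cast hN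
  have hlogM : Real.log M = Real.log 2 + Real.log N := by
    rw [hMdef]
    push_cast
    rw [Real.log_mul (by norm_num) (by positivity)]
  calc (S.card : ℝ) ≤ 8 * (2 * (M + 1) + (M : ℝ) * (1 + Real.log M)) := hnat
    _ ≤ 2000 * N * Real.log N := by
      rw [hlogM, hMdef]
      push_cast
      nlinarith [hlogN, hlog2, hNR, mul_le_mul_of_nonneg_left hlogN (by positivity : (0:ℝ) ≤ 16 * N)]
end

section
/- There exists a constant c > 0 such that for every natural number N ≥ 2, the number of integer triples (x₁, x₂, x₃) with |x₁| ≤ N, |x₂| ≤ N, |x₃| ≤ N satisfying x₁² + 5x₂² + x₃² + 2x₁x₂ + 6x₁x₃ + 2x₂x₃ + 8x₁ + 20x₂ + 16 = 0 is at most c·N·log N. -/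
open Finset

/-- If `d * e` is a perfect square with `d, e` positive, then
`d = g * m^2`, `e = g * t^2` where `g = gcd d e`. -/
lemma square_pair_decomp' {d e s : ℕ} (hd : 0 < d) (he : 0 < e) (h : d * e = s ^ 2) :
    ∃ m t : ℕ, 0 < m ∧ 0 < t ∧ d = Nat.gcd d e * m ^ 2 ∧ e = Nat.gcd d e * t ^ 2 := by
  set g := Nat.gcd d e with hg
  have hgpos : 0 < g := Nat.gcd_pos_of_pos_left _ hd
  have hgd : g ∣ d := Nat.gcd_dvd_left d e
  have hge : g ∣ e := Nat.gcd_dvd_right d e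
  have hds : d = g * (d / g) := (Nat.mul_div_cancel' hgd).symm
  have hes : e = g * (e / g) := (Nat.mul_div_cancel' hge).symm
  have hcop : Nat.Coprime (d / g) (e / g) := Nat.coprime_div_gcd_div_gcd hgpos
  have hgs : g ∣ s := by
    have h2 : g ^ 2 ∣ s ^ 2 := by
      rw [← h]
      calc g ^ 2 = g * g := sq g
      _ ∣ d * e := mul_dvd_mul hgd hge
    exact (Nat.pow_dvd_pow_iff two_ne_zero).mp h2
  have hss : s = g * (s / g) := (Nat.mul_div_cancel' hgs).symm
  have key : (d / g) * (e / g) = (s / g) ^ 2 := by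
    have : (g * g) * ((d / g) * (e / g)) = (g * g) * ((s / g) ^ 2) := by
      calc (g * g) * ((d / g) * (e / g)) = (g * (d / g)) * (g * (e / g)) := by ring
      _ = d * e := by rw [← hds, ← hes]
      _ = s ^ 2 := h
      _ = (g * (s / g)) ^ 2 := by rw [← hss]
      _ = (g * g) * ((s / g) ^ 2) := by ring
    exact Nat.eq_of_mul_eq_mul_left (Nat.mul_pos hgpos hgpos) this
  have hunit : IsUnit (gcd (d / g) (e / g)) := by
    rw [Nat.isUnit_iff]
    exact hcop
  obtain ⟨m, hm⟩ := exists_eq_pow_of_mul_eq_pow hunit key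
  obtain ⟨t, ht⟩ := exists_eq_pow_of_mul_eq_pow (by rwa [gcd_comm] at hunit)
    (by rw [mul_comm]; exact key)
  refine ⟨m, t, ?_, ?_, ?_, ?_⟩
  · rcases Nat.eq_zero_or_pos m with h0 | h0
    · exfalso; rw [h0] at hm; simp at hm
      have : g ≤ d := Nat.le_of_dvd hd hgd
      omega
    · exact h0
  · rcases Nat.eq_zero_or_pos t with h0 | h0
    · exfalso; rw [h0] at ht; simp at ht
      have : g ≤ e := Nat.le_of_dvd he hge
      omega
    · exact h0
  · rw [hds, hm]
  · rw [hes, ht]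

lemma pair_card_bound' (M : ℕ) (hM : 1 ≤ M) :
    ((((Finset.Icc 1 M) ×ˢ (Finset.Icc 1 M)).filter
        (fun p : ℕ × ℕ => Nat.sqrt (p.1 * p.2) ^ 2 = p.1 * p.2)).card : ℝ)
      ≤ M * (1 + Real.log M) := by
  set P := (((Finset.Icc 1 M) ×ˢ (Finset.Icc 1 M)).filter
        (fun p : ℕ × ℕ => Nat.sqrt (p.1 * p.2) ^ 2 = p.1 * p.2)) with hP
  set Sig := (Finset.Icc 1 M).sigma
      (fun a => (Finset.Icc 1 (Nat.sqrt (M / a))) ×ˢ (Finset.Icc 1 (Nat.sqrt (M / a)))) with hSig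
  have key : ∀ p : ℕ × ℕ, p ∈ P →
      0 < p.1 ∧ 0 < p.2 ∧ p.1 ≤ M ∧ p.2 ≤ M ∧
      ∃ m t : ℕ, 0 < m ∧ 0 < t ∧ p.1 = Nat.gcd p.1 p.2 * m ^ 2 ∧
        p.2 = Nat.gcd p.1 p.2 * t ^ 2 := by
    intro p hp
    rw [hP, Finset.mem_filter, Finset.mem_product, Finset.mem_Icc, Finset.mem_Icc] at hp
    obtain ⟨⟨⟨h11, h12⟩, h21, h22⟩, hsq⟩ := hp
    exact ⟨h11, h21, h12, h22, square_pair_decomp' h11 h21 hsq.symm⟩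
  have hdiv : ∀ p : ℕ × ℕ, p ∈ P →
      p.1 / Nat.gcd p.1 p.2 = (Nat.sqrt (p.1 / Nat.gcd p.1 p.2)) ^ 2 ∧
      p.2 / Nat.gcd p.1 p.2 = (Nat.sqrt (p.2 / Nat.gcd p.1 p.2)) ^ 2 := by
    intro p hp
    obtain ⟨h1, h2, _, _, m, t, hm, ht, hdm, het⟩ := key p hp
    have hg : 0 < Nat.gcd p.1 p.2 := Nat.gcd_pos_of_pos_left _ h1
    have hq1 : p.1 / Nat.gcd p.1 p.2 = m ^ 2 :=
      Nat.div_eq_of_eq_mul_left hg (hdm.trans (mul_comm _ _))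
    have hq2 : p.2 / Nat.gcd p.1 p.2 = t ^ 2 :=
      Nat.div_eq_of_eq_mul_left hg (het.trans (mul_comm _ _))
    constructor
    · rw [hq1, Nat.sqrt_eq']
    · rw [hq2, Nat.sqrt_eq']
  have hcard : P.card ≤ Sig.card := by
    apply Finset.card_le_card_of_injOn
      (fun p => ⟨Nat.gcd p.1 p.2,
        (Nat.sqrt (p.1 / Nat.gcd p.1 p.2), Nat.sqrt (p.2 / Nat.gcd p.1 p.2))⟩)
    · intro p hp
      obtain ⟨h1, h2, h1M, h2M, m, t, hm, ht, hdm, het⟩ := key p hp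
      obtain ⟨hs1, hs2⟩ := hdiv p hp
      have hg : 0 < Nat.gcd p.1 p.2 := Nat.gcd_pos_of_pos_left _ h1
      rw [hSig, Finset.mem_coe, Finset.mem_sigma, Finset.mem_product, Finset.mem_Icc, Finset.mem_Icc,
        Finset.mem_Icc]
      have hgle : Nat.gcd p.1 p.2 ≤ M :=
        le_trans (Nat.le_of_dvd h1 (Nat.gcd_dvd_left _ _)) h1M
      have hq1 : 0 < p.1 / Nat.gcd p.1 p.2 := Nat.div_pos (Nat.le_of_dvd h1 (Nat.gcd_dvd_left _ _)) hg
      have hq2 : 0 < p.2 / Nat.gcd p.1 p.2 := Nat.div_pos (Nat.le_of_dvd h2 (Nat.gcd_dvd_right _ _)) hg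
      refine ⟨⟨hg, hgle⟩, ⟨?_, ?_⟩, ⟨?_, ?_⟩⟩
      · rw [Nat.one_le_iff_ne_zero, ← Nat.pos_iff_ne_zero, Nat.sqrt_pos]; exact hq1
      · rw [Nat.le_sqrt]
        rw [Nat.le_div_iff_mul_le hg]
        calc Nat.sqrt (p.1 / Nat.gcd p.1 p.2) * Nat.sqrt (p.1 / Nat.gcd p.1 p.2) *
              Nat.gcd p.1 p.2
            = Nat.gcd p.1 p.2 * (Nat.sqrt (p.1 / Nat.gcd p.1 p.2)) ^ 2 := by ring
          _ = Nat.gcd p.1 p.2 * (p.1 / Nat.gcd p.1 p.2) := by rw [← hs1]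
          _ = p.1 := Nat.mul_div_cancel' (Nat.gcd_dvd_left _ _)
          _ ≤ M := h1M
      · rw [Nat.one_le_iff_ne_zero, ← Nat.pos_iff_ne_zero, Nat.sqrt_pos]; exact hq2
      · rw [Nat.le_sqrt]
        rw [Nat.le_div_iff_mul_le hg]
        calc Nat.sqrt (p.2 / Nat.gcd p.1 p.2) * Nat.sqrt (p.2 / Nat.gcd p.1 p.2) *
              Nat.gcd p.1 p.2
            = Nat.gcd p.1 p.2 * (Nat.sqrt (p.2 / Nat.gcd p.1 p.2)) ^ 2 := by ring
          _ = Nat.gcd p.1 p.2 * (p.2 / Nat.gcd p.1 p.2) := by rw [← hs2]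
          _ = p.2 := Nat.mul_div_cancel' (Nat.gcd_dvd_right _ _)
          _ ≤ M := h2M
    · intro p hp q hq h
      obtain ⟨hgeq, hsnd⟩ := Sigma.mk.inj_iff.mp h
      have hrest : (Nat.sqrt (p.1 / Nat.gcd p.1 p.2), Nat.sqrt (p.2 / Nat.gcd p.1 p.2))
          = (Nat.sqrt (q.1 / Nat.gcd q.1 q.2), Nat.sqrt (q.2 / Nat.gcd q.1 q.2)) :=
        eq_of_heq hsnd
      obtain ⟨hs1p, hs2p⟩ := hdiv p hp
      obtain ⟨hs1q, hs2q⟩ := hdiv q hq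
      obtain ⟨hp1, hp2, _, _, _⟩ := key p hp
      obtain ⟨hq1, hq2, _, _, _⟩ := key q hq
      have e1 : Nat.sqrt (p.1 / Nat.gcd p.1 p.2) = Nat.sqrt (q.1 / Nat.gcd q.1 q.2) :=
        (Prod.mk.inj hrest).1
      have e2 : Nat.sqrt (p.2 / Nat.gcd p.1 p.2) = Nat.sqrt (q.2 / Nat.gcd q.1 q.2) :=
        (Prod.mk.inj hrest).2
      have d1 : p.1 = q.1 := by
        have l1 : p.1 = Nat.gcd p.1 p.2 * (p.1 / Nat.gcd p.1 p.2) :=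
          (Nat.mul_div_cancel' (Nat.gcd_dvd_left _ _)).symm
        have l2 : q.1 = Nat.gcd q.1 q.2 * (q.1 / Nat.gcd q.1 q.2) :=
          (Nat.mul_div_cancel' (Nat.gcd_dvd_left _ _)).symm
        rw [l1, l2, hs1p, hs1q, e1, hgeq]
      have d2 : p.2 = q.2 := by
        have l1 : p.2 = Nat.gcd p.1 p.2 * (p.2 / Nat.gcd p.1 p.2) :=
          (Nat.mul_div_cancel' (Nat.gcd_dvd_right _ _)).symm
        have l2 : q.2 = Nat.gcd q.1 q.2 * (q.2 / Nat.gcd q.1 q.2) :=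
          (Nat.mul_div_cancel' (Nat.gcd_dvd_right _ _)).symm
        rw [l1, l2, hs2p, hs2q, e2, hgeq]
      exact Prod.ext d1 d2
  have hsigcard : (Sig.card : ℝ) ≤ M * (1 + Real.log M) := by
    rw [hSig, Finset.card_sigma]
    push_cast
    have step1 : ∀ a ∈ Finset.Icc 1 M,
        (((Finset.Icc 1 (Nat.sqrt (M / a))) ×ˢ (Finset.Icc 1 (Nat.sqrt (M / a)))).card : ℝ)
          ≤ (M : ℝ) * (a : ℝ)⁻¹ := by
      intro a ha
      rw [Finset.mem_Icc] at ha
      have hapos : 0 < a := ha.1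
      rw [Finset.card_product, Nat.card_Icc]
      have h1 : Nat.sqrt (M / a) * Nat.sqrt (M / a) ≤ M / a := Nat.sqrt_le _
      have h2 : ((M / a : ℕ) : ℝ) ≤ (M : ℝ) / (a : ℝ) := Nat.cast_div_le
      have h3 : ((Nat.sqrt (M / a) + 1 - 1) * (Nat.sqrt (M / a) + 1 - 1) : ℕ) ≤ (M / a : ℕ) := by
        simpa using h1
      calc (((Nat.sqrt (M / a) + 1 - 1) * (Nat.sqrt (M / a) + 1 - 1) : ℕ) : ℝ)
          ≤ ((M / a : ℕ) : ℝ) := by exact_mod_cast h3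
        _ ≤ (M : ℝ) / (a : ℝ) := h2
        _ = (M : ℝ) * (a : ℝ)⁻¹ := div_eq_mul_inv _ _
    calc ∑ a ∈ Finset.Icc 1 M,
          (((Finset.Icc 1 (Nat.sqrt (M / a))) ×ˢ (Finset.Icc 1 (Nat.sqrt (M / a)))).card : ℝ)
        ≤ ∑ a ∈ Finset.Icc 1 M, (M : ℝ) * (a : ℝ)⁻¹ := Finset.sum_le_sum step1
      _ = (M : ℝ) * ∑ a ∈ Finset.Icc 1 M, (a : ℝ)⁻¹ := by rw [Finset.mul_sum]
      _ ≤ (M : ℝ) * (1 + Real.log M) := by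
          apply mul_le_mul_of_nonneg_left _ (by positivity)
          have h := harmonic_le_one_add_log M
          rw [harmonic_eq_sum_Icc] at h
          push_cast at h
          exact h
  calc (P.card : ℝ) ≤ (Sig.card : ℝ) := by exact_mod_cast hcard
    _ ≤ M * (1 + Real.log M) := hsigcard

theorem nondiagonal_cone_solution_count_bound :
    ∃ c : ℝ, 0 < c ∧ ∀ N : ℕ, 2 ≤ N →
      (((Finset.Icc (-(N : ℤ)) N ×ˢ Finset.Icc (-(N : ℤ)) N ×ˢ
            Finset.Icc (-(N : ℤ)) N).filter
          (fun p : ℤ × ℤ × ℤ =>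
            p.1 ^ 2 + 5 * p.2.1 ^ 2 + p.2.2 ^ 2 + 2 * p.1 * p.2.1 +
              6 * p.1 * p.2.2 + 2 * p.2.1 * p.2.2 + 8 * p.1 + 20 * p.2.1 + 16
            = 0)).card : ℝ)
        ≤ c * N * Real.log N := by
  refine ⟨1000, by norm_num, ?_⟩
  intro N hN
  have hNz : (2 : ℤ) ≤ (N : ℤ) := by exact_mod_cast hN
  set S := ((Finset.Icc (-(N : ℤ)) N ×ˢ Finset.Icc (-(N : ℤ)) N ×ˢ
            Finset.Icc (-(N : ℤ)) N).filter
          (fun p : ℤ × ℤ × ℤ =>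
            p.1 ^ 2 + 5 * p.2.1 ^ 2 + p.2.2 ^ 2 + 2 * p.1 * p.2.1 +
              6 * p.1 * p.2.2 + 2 * p.2.1 * p.2.2 + 8 * p.1 + 20 * p.2.1 + 16
            = 0)) with hS
  set T := ((Finset.Icc (-(8*(N:ℤ))) (8*(N:ℤ)) ×ˢ Finset.Icc (-(8*(N:ℤ))) (8*(N:ℤ)) ×ˢ
      Finset.Icc (-(8*(N:ℤ))) (8*(N:ℤ))).filter
      (fun q : ℤ × ℤ × ℤ => q.1 ^ 2 + q.2.1 ^ 2 = q.2.2 ^ 2)) with hT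
  have memT : ∀ q : ℤ × ℤ × ℤ, q ∈ T →
      (-(8*(N:ℤ)) ≤ q.1 ∧ q.1 ≤ 8*(N:ℤ)) ∧ (-(8*(N:ℤ)) ≤ q.2.1 ∧ q.2.1 ≤ 8*(N:ℤ)) ∧
      (-(8*(N:ℤ)) ≤ q.2.2 ∧ q.2.2 ≤ 8*(N:ℤ)) ∧ q.1 ^ 2 + q.2.1 ^ 2 = q.2.2 ^ 2 := by
    intro q hq
    rw [hT, Finset.mem_filter, Finset.mem_product, Finset.mem_product] at hq
    simp only [Finset.mem_Icc] at hq
    tauto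
  -- Step A : inject solutions into Pythagorean triples
  have stepA : S.card ≤ T.card := by
    apply Finset.card_le_card_of_injOn
      (fun p : ℤ × ℤ × ℤ => (p.1 + p.2.1 + 3*p.2.2 + 4, (2*p.2.1 - p.2.2 + 3, 3*p.2.2 + 3)))
    · intro p hp
      rw [hS, Finset.mem_coe, Finset.mem_filter, Finset.mem_product, Finset.mem_product] at hp
      simp only [Finset.mem_Icc] at hp
      obtain ⟨⟨⟨h11, h12⟩, ⟨h21, h22⟩, h31, h32⟩, heq⟩ := hp
      rw [hT, Finset.mem_coe, Finset.mem_filter, Finset.mem_product, Finset.mem_product]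
      simp only [Finset.mem_Icc]
      refine ⟨⟨⟨?_, ?_⟩, ⟨?_, ?_⟩, ?_, ?_⟩, ?_⟩
      · omega
      · omega
      · omega
      · omega
      · omega
      · omega
      · linear_combination heq
    · rintro ⟨p1, p2, p3⟩ _ ⟨q1, q2, q3⟩ _ h
      simp only [Prod.mk.injEq] at h ⊢
      omega
  -- split T according to whether the middle coordinate vanishes
  have hsplit : (T.filter (fun q : ℤ × ℤ × ℤ => q.2.1 = 0)).card
      + (T.filter (fun q : ℤ × ℤ × ℤ => ¬ q.2.1 = 0)).card = T.card :=
    Finset.card_filter_add_card_filter_not _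
  -- bound the degenerate part
  have hT0 : (T.filter (fun q : ℤ × ℤ × ℤ => q.2.1 = 0)).card ≤ (16*N+1) * 2 := by
    have htar : ((Finset.Icc (-(8*(N:ℤ))) (8*(N:ℤ))) ×ˢ (Finset.univ : Finset Bool)).card
        = (16*N+1) * 2 := by
      rw [Finset.card_product, Int.card_Icc, Finset.card_univ, Fintype.card_bool]
      omega
    rw [← htar]
    apply Finset.card_le_card_of_injOn (fun q : ℤ × ℤ × ℤ => (q.1, decide (q.2.2 = q.1)))
    · intro q hq
      have hm := memT q (Finset.filter_subset _ _ hq)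
      rw [Finset.mem_coe, Finset.mem_product, Finset.mem_Icc]
      exact ⟨⟨hm.1.1, hm.1.2⟩, Finset.mem_univ _⟩
    · rintro ⟨q1, q2, q3⟩ hq ⟨r1, r2, r3⟩ hr h
      simp only [Finset.coe_filter, Set.mem_setOf_eq] at hq hr
      have hmq := memT _ hq.1
      have hmr := memT _ hr.1
      have hq0 : q2 = 0 := hq.2
      have hr0 : r2 = 0 := hr.2
      simp only [Prod.mk.injEq] at h ⊢
      have hiff : (q3 = q1) ↔ (r3 = r1) := decide_eq_decide.mp h.2
      have hq' : (q3 - q1) * (q3 + q1) = 0 := by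
        have := hmq.2.2.2
        linear_combination q2 * hq0 - this
      have hr' : (r3 - r1) * (r3 + r1) = 0 := by
        have := hmr.2.2.2
        linear_combination r2 * hr0 - this
      have dq := mul_eq_zero.mp hq'
      have dr := mul_eq_zero.mp hr'
      omega
  -- bound the nondegenerate part
  set Ppair := (((Finset.Icc 1 (16*N)) ×ˢ (Finset.Icc 1 (16*N))).filter
      (fun p : ℕ × ℕ => Nat.sqrt (p.1 * p.2) ^ 2 = p.1 * p.2)) with hPp
  have hT1 : (T.filter (fun q : ℤ × ℤ × ℤ => ¬ q.2.1 = 0)).card ≤ Ppair.card * 4 := by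
    have htar : (Ppair ×ˢ (Finset.univ : Finset (Bool × Bool))).card = Ppair.card * 4 := by
      rw [Finset.card_product, Finset.card_univ]
      simp [Fintype.card_prod]
    rw [← htar]
    apply Finset.card_le_card_of_injOn (fun q : ℤ × ℤ × ℤ =>
      (((q.2.2 - q.1).natAbs, (q.2.2 + q.1).natAbs),
        (decide (0 < q.2.1), decide (0 < q.2.2 - q.1))))
    · intro q hq
      have hm := memT q (Finset.filter_subset _ _ hq)
      have hB : q.2.1 ≠ 0 := (Finset.mem_filter.mp hq).2
      obtain ⟨⟨hA1, hA2⟩, ⟨hB1, hB2⟩, ⟨hC1, hC2⟩, heq⟩ := hm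
      have hde : (q.2.2 - q.1) * (q.2.2 + q.1) = q.2.1 * q.2.1 := by linear_combination -heq
      have hpos : 0 < (q.2.2 - q.1) * (q.2.2 + q.1) := by
        rw [hde]; exact mul_self_pos.mpr hB
      have hsigns := mul_pos_iff.mp hpos
      rw [Finset.mem_coe, Finset.mem_product]
      refine ⟨?_, Finset.mem_univ _⟩
      rw [hPp, Finset.mem_filter, Finset.mem_product]
      simp only [Finset.mem_Icc]
      refine ⟨⟨⟨?_, ?_⟩, ?_, ?_⟩, ?_⟩
      · omega
      · omega
      · omega
      · omega
      · have habs : (q.2.2 - q.1).natAbs * (q.2.2 + q.1).natAbs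
            = q.2.1.natAbs * q.2.1.natAbs := by
          rw [← Int.natAbs_mul, ← Int.natAbs_mul, hde]
        rw [habs, Nat.sqrt_eq, pow_two]
    · rintro ⟨q1, q2, q3⟩ hq ⟨r1, r2, r3⟩ hr h
      simp only [Finset.coe_filter, Set.mem_setOf_eq] at hq hr
      have hmq := memT _ hq.1
      have hmr := memT _ hr.1
      have hBq : q2 ≠ 0 := hq.2
      have hBr : r2 ≠ 0 := hr.2
      have hdeq : (q3 - q1) * (q3 + q1) = q2 * q2 := by
        have := hmq.2.2.2; linear_combination -this
      have hder : (r3 - r1) * (r3 + r1) = r2 * r2 := by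
        have := hmr.2.2.2; linear_combination -this
      have hposq : 0 < (q3 - q1) * (q3 + q1) := by rw [hdeq]; exact mul_self_pos.mpr hBq
      have hposr : 0 < (r3 - r1) * (r3 + r1) := by rw [hder]; exact mul_self_pos.mpr hBr
      have hsq := mul_pos_iff.mp hposq
      have hsr := mul_pos_iff.mp hposr
      simp only [Prod.mk.injEq] at h ⊢
      obtain ⟨⟨e1, e2⟩, e3, e4⟩ := h
      have hiffB : (0 < q2) ↔ (0 < r2) := decide_eq_decide.mp e3
      have hiffd : (0 < q3 - q1) ↔ (0 < r3 - r1) := decide_eq_decide.mp e4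
      have hd : q3 - q1 = r3 - r1 := by omega
      have he : q3 + q1 = r3 + r1 := by omega
      have hACq : q1 = r1 ∧ q3 = r3 := by omega
      have habsB : q2.natAbs = r2.natAbs := by
        have h1 : q2.natAbs * q2.natAbs = r2.natAbs * r2.natAbs := by
          rw [← Int.natAbs_mul, ← Int.natAbs_mul, ← hdeq, ← hder, hd, he]
        exact Nat.mul_self_inj.mp h1
      refine ⟨hACq.1, ?_, hACq.2⟩
      omega
  -- numeric part
  have hPreal : (Ppair.card : ℝ) ≤ (16*N : ℕ) * (1 + Real.log (16*N : ℕ)) :=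
    pair_card_bound' (16*N) (by omega)
  have hNr : (2 : ℝ) ≤ (N : ℝ) := by exact_mod_cast hN
  have hlog2 : (1/2 : ℝ) ≤ Real.log N := by
    have h1 : Real.log 2 ≤ Real.log N := Real.log_le_log two_pos hNr
    have h2 := Real.log_two_gt_d9
    linarith
  have hlog16 : Real.log (16 * (N:ℝ)) ≤ 5 * Real.log N := by
    have h24 : (2:ℝ) ^ 4 ≤ (N:ℝ) ^ 4 := pow_le_pow_left₀ (by norm_num) hNr 4
    have h1 : (16 : ℝ) * N ≤ (N : ℝ) ^ 5 := by
      have := mul_le_mul_of_nonneg_right h24 (by linarith : (0:ℝ) ≤ (N:ℝ))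
      calc (16 : ℝ) * N = 2 ^ 4 * N := by norm_num
        _ ≤ (N:ℝ) ^ 4 * N := this
        _ = (N : ℝ) ^ 5 := by ring
    calc Real.log (16 * N) ≤ Real.log ((N : ℝ) ^ 5) :=
          Real.log_le_log (by positivity) h1
      _ = 5 * Real.log N := by rw [Real.log_pow]; push_cast; ring
  have hcount : (S.card : ℝ) ≤ ((16*N+1) * 2 + Ppair.card * 4 : ℕ) := by
    have : S.card ≤ (16*N+1) * 2 + Ppair.card * 4 := by omega
    exact_mod_cast this
  have hfinal : (((16*N+1) * 2 + Ppair.card * 4 : ℕ) : ℝ) ≤ 1000 * N * Real.log N := by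
    push_cast
    have hcast : ((16*N : ℕ) : ℝ) = 16 * N := by push_cast; ring
    rw [hcast] at hPreal
    have hlgpos : (0:ℝ) ≤ Real.log N := by linarith
    nlinarith [mul_le_mul_of_nonneg_left hlog16 (show (0:ℝ) ≤ 64 * N by positivity),
      mul_le_mul_of_nonneg_left hlog2 (show (0:ℝ) ≤ 64 * N by positivity),
      mul_le_mul_of_nonneg_right hNr hlgpos]
  calc (S.card : ℝ) ≤ _ := hcount
    _ ≤ 1000 * N * Real.log N := hfinal
end
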